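/- In the point-treatment proximal setting with binary A, suppose h satisfies the outcome bridge equation with respect to U (E[Y|A=a,U,X] = E[h(W,a,X)|A=a,U,X]) and q satisfies the treatment bridge equation with respect to U (1/P(A=a|U,X) = E[q(Z,a,X)|A=a,U,X]), with Z ⟂ (W, Y) | (A, U, X), W ⟂ (Z, A) | (U, X), latent ignorability Y_a ⟂ (A,Z) | (U,X), consistency and positivity. Then the doubly robust functional satisfies E[ 1{A=a} q(Z,a,X) (Y − h(W,a,X)) + h(W,a,X) ] = E[Y_a]. -/

import Mathlib

open Finset MeasureTheory

open scoped Classical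

/-- Probability of an event on a finite outcome space with mass function `p`. -/
noncomputable def pr {Ω : Type*} [Fintype Ω] (p : Ω → ℝ) (E : Ω → Prop) : ℝ :=
  ∑ ω, if E ω then p ω else 0

/-- Conditional expectation `E[f | E]` on a finite outcome space. -/
noncomputable def cexp {Ω : Type*} [Fintype Ω] (p : Ω → ℝ) (f : Ω → ℝ) (E : Ω → Prop) : ℝ :=
  (∑ ω, if E ω then p ω * f ω else 0) / pr p E

/-- Conditional probability `P(E | F)` on a finite outcome space. -/
noncomputable def cprob {Ω : Type*} [Fintype Ω] (p : Ω → ℝ) (E F : Ω → Prop) : ℝ :=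
  pr p (fun ω => E ω ∧ F ω) / pr p F

/-- Expectation on a finite outcome space. -/
noncomputable def pexp {Ω : Type*} [Fintype Ω] (p : Ω → ℝ) (f : Ω → ℝ) : ℝ :=
  ∑ ω, p ω * f ω

/-- `S` is conditionally independent of `T` given `C`:  for every pair of (bounded) test
functions `F, G` and every value `c` of `C` with positive probability, the conditional
expectation of the product factorizes. -/
def CondIndep {Ω α β γ : Type*} [Fintype Ω] (p : Ω → ℝ)
    (S : Ω → α) (T : Ω → β) (C : Ω → γ) : Prop :=
  ∀ (F : α → ℝ) (G : β → ℝ) (c : γ), pr p (fun ω => C ω = c) ≠ 0 →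
    cexp p (fun ω => F (S ω) * G (T ω)) (fun ω => C ω = c) =
      cexp p (fun ω => F (S ω)) (fun ω => C ω = c) *
        cexp p (fun ω => G (T ω)) (fun ω => C ω = c)

section Aux

variable {Ω : Type*} [Fintype Ω]

lemma pr_ext (p : Ω → ℝ) {E E' : Ω → Prop} (hE : ∀ ω, E ω ↔ E' ω) :
    pr p E = pr p E' := by
  unfold pr
  exact Finset.sum_congr rfl fun ω _ => if_congr (hE ω) rfl rfl

lemma cexp_ext (p : Ω → ℝ) {f g : Ω → ℝ} {E E' : Ω → Prop}
    (hE : ∀ ω, E ω ↔ E' ω) (hf : ∀ ω, E ω → f ω = g ω) :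
    cexp p f E = cexp p g E' := by
  unfold cexp
  rw [pr_ext p hE]
  congr 1
  refine Finset.sum_congr rfl fun ω _ => ?_
  by_cases hω : E ω
  · rw [if_pos hω, if_pos ((hE ω).mp hω), hf ω hω]
  · rw [if_neg hω, if_neg (fun h' => hω ((hE ω).mpr h'))]

lemma pr_nonneg (p : Ω → ℝ) (hp : ∀ ω, 0 ≤ p ω) (E : Ω → Prop) : 0 ≤ pr p E := by
  refine Finset.sum_nonneg fun ω _ => ?_
  by_cases hω : E ω <;> simp [hω, hp ω]

lemma cexp_sub_add (p : Ω → ℝ) (f g k : Ω → ℝ) (E : Ω → Prop) :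
    cexp p (fun ω => f ω - g ω + k ω) E = cexp p f E - cexp p g E + cexp p k E := by
  simp only [cexp]
  rw [div_sub_div_same, ← add_div, ← Finset.sum_sub_distrib, ← Finset.sum_add_distrib]
  congr 1
  refine Finset.sum_congr rfl fun ω _ => ?_
  by_cases hω : E ω <;> simp [hω] <;> ring

/-- the "inverse propensity" factor integrates to one given the treatment bridge. -/
lemma K_eq_one {𝒰 𝒵 𝒳 : Type*}
    (p : Ω → ℝ) (hp : ∀ ω, 0 ≤ p ω)
    (U : Ω → 𝒰) (Z : Ω → 𝒵) (X : Ω → 𝒳) (A : Ω → Bool) (q : 𝒵 → Bool → 𝒳 → ℝ)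
    (a : Bool) (u : 𝒰) (x : 𝒳)
    (hne : pr p (fun ω => U ω = u ∧ X ω = x) ≠ 0)
    (hposc : 0 < cprob p (fun ω => A ω = a) (fun ω => U ω = u ∧ X ω = x))
    (hbq : pr p (fun ω => A ω = a ∧ U ω = u ∧ X ω = x) ≠ 0 →
      (cprob p (fun ω => A ω = a) (fun ω => U ω = u ∧ X ω = x))⁻¹ =
        cexp p (fun ω => q (Z ω) a (X ω)) (fun ω => A ω = a ∧ U ω = u ∧ X ω = x)) :
    cexp p (fun ω => (if A ω = a then (1 : ℝ) else 0) * q (Z ω) a (X ω))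
      (fun ω => U ω = u ∧ X ω = x) = 1 := by
  have hprAE : pr p (fun ω => A ω = a ∧ U ω = u ∧ X ω = x) ≠ 0 := by
    intro h0
    rw [cprob] at hposc
    rw [show (fun ω => A ω = a ∧ (U ω = u ∧ X ω = x)) =
        (fun ω => A ω = a ∧ U ω = u ∧ X ω = x) from rfl, h0, zero_div] at hposc
    exact lt_irrefl 0 hposc
  have hq := hbq hprAE
  have hnum : (∑ ω, if U ω = u ∧ X ω = x then
        p ω * ((if A ω = a then (1 : ℝ) else 0) * q (Z ω) a (X ω)) else 0)
      = ∑ ω, if A ω = a ∧ U ω = u ∧ X ω = x then p ω * q (Z ω) a (X ω) else 0 := by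
    refine Finset.sum_congr rfl fun ω _ => ?_
    by_cases hA : A ω = a <;> by_cases hE : U ω = u ∧ X ω = x <;>
      simp [hA, hE] <;> ring
  simp only [cexp]
  rw [hnum]
  simp only [cexp] at hq
  have hcne : cprob p (fun ω => A ω = a) (fun ω => U ω = u ∧ X ω = x) ≠ 0 := ne_of_gt hposc
  have : (∑ ω, if A ω = a ∧ U ω = u ∧ X ω = x then p ω * q (Z ω) a (X ω) else 0)
      = (cprob p (fun ω => A ω = a) (fun ω => U ω = u ∧ X ω = x))⁻¹ *
        pr p (fun ω => A ω = a ∧ U ω = u ∧ X ω = x) := by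
    rw [hq, div_mul_cancel₀ _ hprAE]
  rw [this, cprob]
  rw [show (fun ω => A ω = a ∧ (U ω = u ∧ X ω = x)) =
      (fun ω => A ω = a ∧ U ω = u ∧ X ω = x) from rfl]
  have hcne' : pr p (fun ω => A ω = a ∧ U ω = u ∧ X ω = x) / pr p (fun ω => U ω = u ∧ X ω = x)
      ≠ 0 := by
    rw [cprob] at hcne
    exact hcne
  field_simp

/-- Per-fiber identity: conditionally on `U = u, X = x`, the doubly robust functional
has the same conditional mean as the counterfactual outcome. -/
lemma fiber_key {Ω 𝒰 𝒵 𝒳 𝒲 : Type*} [Fintype Ω]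
    (p : Ω → ℝ) (hp : ∀ ω, 0 ≤ p ω)
    (U : Ω → 𝒰) (Z : Ω → 𝒵) (X : Ω → 𝒳) (W : Ω → 𝒲) (A : Ω → Bool)
    (Y : Ω → ℝ) (Y' : Bool → Ω → ℝ)
    (h : 𝒲 → Bool → 𝒳 → ℝ) (q : 𝒵 → Bool → 𝒳 → ℝ)
    (hcons : ∀ ω, Y ω = Y' (A ω) ω)
    (hWCI : CondIndep p W (fun ω => (Z ω, A ω)) (fun ω => (U ω, X ω)))
    (hLI : ∀ a : Bool,
      CondIndep p (fun ω => Y' a ω) (fun ω => (A ω, Z ω)) (fun ω => (U ω, X ω)))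
    (a : Bool) (u : 𝒰) (x : 𝒳)
    (hne : pr p (fun ω => U ω = u ∧ X ω = x) ≠ 0)
    (hposc : 0 < cprob p (fun ω => A ω = a) (fun ω => U ω = u ∧ X ω = x))
    (hbq : pr p (fun ω => A ω = a ∧ U ω = u ∧ X ω = x) ≠ 0 →
      (cprob p (fun ω => A ω = a) (fun ω => U ω = u ∧ X ω = x))⁻¹ =
        cexp p (fun ω => q (Z ω) a (X ω)) (fun ω => A ω = a ∧ U ω = u ∧ X ω = x)) :
    cexp p (fun ω => (if A ω = a then (1 : ℝ) else 0) * q (Z ω) a (X ω) *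
        (Y ω - h (W ω) a (X ω)) + h (W ω) a (X ω)) (fun ω => U ω = u ∧ X ω = x) =
      cexp p (Y' a) (fun ω => U ω = u ∧ X ω = x) := by
  have hE : ∀ ω, (U ω = u ∧ X ω = x) ↔ ((U ω, X ω) = (u, x)) := fun ω => by
    simp [Prod.ext_iff]
  have hE' : ∀ ω, ((U ω, X ω) = (u, x)) ↔ (U ω = u ∧ X ω = x) := fun ω => (hE ω).symm
  have hneP : pr p (fun ω => (U ω, X ω) = (u, x)) ≠ 0 := by
    rw [← pr_ext p hE]; exact hne
  have hK : cexp p (fun ω => (if A ω = a then (1 : ℝ) else 0) * q (Z ω) a (X ω))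
      (fun ω => U ω = u ∧ X ω = x) = 1 :=
    K_eq_one p hp U Z X A q a u x hne hposc hbq
  -- split the functional in three pieces, using consistency on the indicator
  have hsplit : cexp p (fun ω => (if A ω = a then (1 : ℝ) else 0) * q (Z ω) a (X ω) *
        (Y ω - h (W ω) a (X ω)) + h (W ω) a (X ω)) (fun ω => U ω = u ∧ X ω = x) =
      cexp p (fun ω => (if A ω = a then (1 : ℝ) else 0) * q (Z ω) a (X ω) * Y' a ω)
          (fun ω => U ω = u ∧ X ω = x)
        - cexp p (fun ω => (if A ω = a then (1 : ℝ) else 0) * q (Z ω) a (X ω) *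
            h (W ω) a (X ω)) (fun ω => U ω = u ∧ X ω = x)
        + cexp p (fun ω => h (W ω) a (X ω)) (fun ω => U ω = u ∧ X ω = x) := by
    rw [← cexp_sub_add]
    refine cexp_ext p (fun ω => Iff.rfl) (fun ω _ => ?_)
    by_cases hA : A ω = a
    · simp only [hcons ω, hA, if_pos]
      ring
    · simp [hA]
  rw [hsplit]
  -- first piece: latent ignorability + bridge for q
  have h1 := hLI a id (fun t : Bool × 𝒵 => (if t.1 = a then (1 : ℝ) else 0) * q t.2 a x)
    (u, x) hneP
  have e1a : cexp p (fun ω => (if A ω = a then (1 : ℝ) else 0) * q (Z ω) a (X ω) * Y' a ω)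
      (fun ω => U ω = u ∧ X ω = x) =
      cexp p (fun ω => id (Y' a ω) *
        (fun t : Bool × 𝒵 => (if t.1 = a then (1 : ℝ) else 0) * q t.2 a x) (A ω, Z ω))
        (fun ω => (U ω, X ω) = (u, x)) := by
    refine cexp_ext p hE (fun ω hω => ?_)
    obtain ⟨hu, hx⟩ := hω
    simp only [id_eq, hx]
    ring
  have e1b : cexp p (fun ω => id (Y' a ω)) (fun ω => (U ω, X ω) = (u, x)) =
      cexp p (Y' a) (fun ω => U ω = u ∧ X ω = x) :=
    cexp_ext p hE' (fun ω _ => rfl)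
  have e1c : cexp p (fun ω =>
        (fun t : Bool × 𝒵 => (if t.1 = a then (1 : ℝ) else 0) * q t.2 a x) (A ω, Z ω))
        (fun ω => (U ω, X ω) = (u, x)) =
      cexp p (fun ω => (if A ω = a then (1 : ℝ) else 0) * q (Z ω) a (X ω))
        (fun ω => U ω = u ∧ X ω = x) := by
    refine cexp_ext p hE' (fun ω hω => ?_)
    obtain ⟨hu, hx⟩ := (hE ω).mpr hω
    simp only [hx]
  rw [e1a, h1, e1b, e1c, hK, mul_one]
  -- second piece: W-independence + bridge for q
  have h2 := hWCI (fun w => h w a x)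
    (fun t : 𝒵 × Bool => (if t.2 = a then (1 : ℝ) else 0) * q t.1 a x) (u, x) hneP
  have e2a : cexp p (fun ω => (if A ω = a then (1 : ℝ) else 0) * q (Z ω) a (X ω) *
        h (W ω) a (X ω)) (fun ω => U ω = u ∧ X ω = x) =
      cexp p (fun ω => (fun w => h w a x) (W ω) *
        (fun t : 𝒵 × Bool => (if t.2 = a then (1 : ℝ) else 0) * q t.1 a x) (Z ω, A ω))
        (fun ω => (U ω, X ω) = (u, x)) := by
    refine cexp_ext p hE (fun ω hω => ?_)
    obtain ⟨hu, hx⟩ := hω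
    simp only [hx]
    ring
  have e2b : cexp p (fun ω => (fun w => h w a x) (W ω)) (fun ω => (U ω, X ω) = (u, x)) =
      cexp p (fun ω => h (W ω) a (X ω)) (fun ω => U ω = u ∧ X ω = x) := by
    refine cexp_ext p hE' (fun ω hω => ?_)
    obtain ⟨hu, hx⟩ := (hE ω).mpr hω
    simp only [hx]
  have e2c : cexp p (fun ω =>
        (fun t : 𝒵 × Bool => (if t.2 = a then (1 : ℝ) else 0) * q t.1 a x) (Z ω, A ω))
        (fun ω => (U ω, X ω) = (u, x)) =
      cexp p (fun ω => (if A ω = a then (1 : ℝ) else 0) * q (Z ω) a (X ω))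
        (fun ω => U ω = u ∧ X ω = x) := by
    refine cexp_ext p hE' (fun ω hω => ?_)
    obtain ⟨hu, hx⟩ := (hE ω).mpr hω
    simp only [hx]
  rw [e2a, h2, e2b, e2c, hK, mul_one]
  ring

end Aux

/-- point-treatment proximal doubly robust identification: when `h` is a
valid outcome confounding bridge and `q` a valid treatment confounding bridge (both at
the latent level), the doubly robust functional recovers the counterfactual mean:
`E[1{A=a} q(Z,a,X)(Y − h(W,a,X)) + h(W,a,X)] = E[Y_a]`. -/
theorem stmt_18 {Ω 𝒰 𝒵 𝒳 𝒲 : Type*} [Fintype Ω]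
    (p : Ω → ℝ) (hp : ∀ ω, 0 ≤ p ω) (hsum : ∑ ω, p ω = 1)
    (U : Ω → 𝒰) (Z : Ω → 𝒵) (X : Ω → 𝒳) (W : Ω → 𝒲) (A : Ω → Bool)
    (Y : Ω → ℝ) (Y' : Bool → Ω → ℝ)
    (h : 𝒲 → Bool → 𝒳 → ℝ) (q : 𝒵 → Bool → 𝒳 → ℝ)
    (hcons : ∀ ω, Y ω = Y' (A ω) ω)
    (hpos : ∀ (a : Bool) u x, pr p (fun ω => U ω = u ∧ X ω = x) ≠ 0 →
      0 < cprob p (fun ω => A ω = a) (fun ω => U ω = u ∧ X ω = x))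
    (hZCI : ∀ a : Bool,
      CondIndep p Z (fun ω => (W ω, Y' a ω)) (fun ω => (A ω, U ω, X ω)))
    (hWCI : CondIndep p W (fun ω => (Z ω, A ω)) (fun ω => (U ω, X ω)))
    (hLI : ∀ a : Bool,
      CondIndep p (fun ω => Y' a ω) (fun ω => (A ω, Z ω)) (fun ω => (U ω, X ω)))
    (hbridgeh : ∀ (a : Bool) u x, pr p (fun ω => A ω = a ∧ U ω = u ∧ X ω = x) ≠ 0 →
      cexp p Y (fun ω => A ω = a ∧ U ω = u ∧ X ω = x) =
        cexp p (fun ω => h (W ω) a (X ω)) (fun ω => A ω = a ∧ U ω = u ∧ X ω = x))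
    (hbridgeq : ∀ (a : Bool) u x, pr p (fun ω => A ω = a ∧ U ω = u ∧ X ω = x) ≠ 0 →
      (cprob p (fun ω => A ω = a) (fun ω => U ω = u ∧ X ω = x))⁻¹ =
        cexp p (fun ω => q (Z ω) a (X ω)) (fun ω => A ω = a ∧ U ω = u ∧ X ω = x)) :
    ∀ a : Bool,
      pexp p (fun ω =>
        (if A ω = a then (1 : ℝ) else 0) * q (Z ω) a (X ω) *
            (Y ω - h (W ω) a (X ω)) + h (W ω) a (X ω)) =
        pexp p (Y' a) := by
  intro a
  have hfib : ∀ g : Ω → ℝ, pexp p g =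
      ∑ c ∈ Finset.univ.image (fun ω => (U ω, X ω)),
        ∑ ω ∈ Finset.univ.filter (fun ω => (U ω, X ω) = c), p ω * g ω := by
    intro g
    rw [pexp]
    exact (Finset.sum_fiberwise_of_maps_to
      (fun ω _ => Finset.mem_image_of_mem _ (Finset.mem_univ ω)) _).symm
  rw [hfib, hfib]
  refine Finset.sum_congr rfl fun c _ => ?_
  obtain ⟨u, x⟩ := c
  by_cases h0 : pr p (fun ω => U ω = u ∧ X ω = x) = 0
  · -- degenerate fiber: all mass is zero there
    have hz : ∀ ω, (U ω, X ω) = (u, x) → p ω = 0 := by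
      intro ω hω
      obtain ⟨hu, hx⟩ := Prod.mk.injEq .. ▸ hω
      have hterm := (Finset.sum_eq_zero_iff_of_nonneg (fun ω _ => by
        by_cases hE : U ω = u ∧ X ω = x
        · simp [hE, hp ω]
        · simp [hE])).mp h0 ω (Finset.mem_univ ω)
      simpa [hu, hx] using hterm
    rw [Finset.sum_eq_zero, Finset.sum_eq_zero]
    · intro ω hω
      rw [hz ω (Finset.mem_filter.mp hω).2, zero_mul]
    · intro ω hω
      rw [hz ω (Finset.mem_filter.mp hω).2, zero_mul]
  · have hsum1 : ∀ g : Ω → ℝ,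
        ∑ ω ∈ Finset.univ.filter (fun ω => (U ω, X ω) = (u, x)), p ω * g ω =
          cexp p g (fun ω => U ω = u ∧ X ω = x) * pr p (fun ω => U ω = u ∧ X ω = x) := by
      intro g
      rw [cexp, div_mul_cancel₀ _ h0, Finset.sum_filter]
      refine Finset.sum_congr rfl fun ω _ => ?_
      by_cases hE : U ω = u ∧ X ω = x
      · rw [if_pos hE, if_pos (by simp [Prod.ext_iff, hE])]
      · rw [if_neg hE, if_neg (by simp [Prod.ext_iff]; exact fun hu hx => hE ⟨hu, hx⟩)]
    rw [hsum1, hsum1,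
      fiber_key p hp U Z X W A Y Y' h q hcons hWCI hLI a u x h0 (hpos a u x h0)
        (hbridgeq a u x)]
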